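/- Let k be a field of characteristic different from 2, let n ≥ 1, and let R = k[x₁, …, xₙ] be the polynomial ring. Let σ be the k-algebra involution of R determined by σ(x₁) = −x₁ and σ(xᵢ) = xᵢ for i ≥ 2. Let M be an R-module equipped with an additive involution s : M → M satisfying s(s(m)) = m and s(r • m) = σ(r) • s(m) for all r ∈ R, m ∈ M. If s induces the identity on M/(x₁)M, i.e. s(m) − m ∈ x₁·M for all m ∈ M, then M is generated as an R-module by its fixed submodule M^s = {m ∈ M : s(m) = m}; that is, the natural map R ⊗_k M^s → M is surjective. -/

import Mathlib

/-- Let `k` be a field with `char k ≠ 2`, `R = k[x₁,…,xₙ]` (n ≥ 1),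
and `σ` the `k`-algebra involution with `σ(x₁) = -x₁`, `σ(xᵢ) = xᵢ` for `i ≥ 2`.
If `M` is an `R`-module with a compatible additive involution `s` (i.e.
`s(r•m) = σ(r)•s(m)`) which is the identity modulo `x₁·M`, then `M` is generated
over `R` by the fixed submodule `M^s`. -/
theorem stmt3 {k : Type*} [Field k] (h2 : (2 : k) ≠ 0)
    (n : ℕ) (hn : 0 < n)
    (σ : MvPolynomial (Fin n) k →ₐ[k] MvPolynomial (Fin n) k)
    (hσ0 : σ (MvPolynomial.X ⟨0, hn⟩) = - MvPolynomial.X ⟨0, hn⟩)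
    (hσ : ∀ i : Fin n, i ≠ ⟨0, hn⟩ → σ (MvPolynomial.X i) = MvPolynomial.X i)
    {M : Type*} [AddCommGroup M] [Module (MvPolynomial (Fin n) k) M]
    (s : M → M)
    (hadd : ∀ m m' : M, s (m + m') = s m + s m')
    (hinv : ∀ m : M, s (s m) = m)
    (hsemi : ∀ (r : MvPolynomial (Fin n) k) (m : M), s (r • m) = σ r • s m)
    (hid : ∀ m : M, ∃ m' : M,
      s m - m = (MvPolynomial.X ⟨0, hn⟩ : MvPolynomial (Fin n) k) • m') :
    Submodule.span (MvPolynomial (Fin n) k) {m : M | s m = m} = ⊤ := by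
  set R := MvPolynomial (Fin n) k
  set X0 : R := MvPolynomial.X ⟨0, hn⟩ with hX0
  rw [Submodule.eq_top_iff']
  intro m
  set N := Submodule.span R {m : M | s m = m} with hN
  -- basic additive facts about s
  have hs0 : s 0 = 0 := by
    have h := hadd 0 0
    rw [add_zero] at h
    exact (left_eq_add.mp h)
  have hneg : ∀ x : M, s (-x) = - s x := by
    intro x
    have h := hadd (-x) x
    rw [neg_add_cancel, hs0] at h
    exact eq_neg_of_add_eq_zero_left h.symm
  have hsub : ∀ x y : M, s (x - y) = s x - s y := by
    intro x y
    rw [sub_eq_add_neg, hadd, hneg, sub_eq_add_neg]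
  -- the "half" scalar
  set h : R := MvPolynomial.C ((2:k)⁻¹) with hh
  have hC2 : (MvPolynomial.C (2:k) : R) = 2 := by
    simp [map_ofNat]
  have h2R : h * 2 = 1 := by
    rw [hh, ← hC2, ← map_mul, inv_mul_cancel₀ h2, map_one]
  have hs_h : ∀ x : M, s (h • x) = h • s x := by
    intro x
    rw [hsemi]
    congr 1
    rw [hh, ← MvPolynomial.algebraMap_eq]
    exact σ.commutes _
  obtain ⟨m', hm'⟩ := hid m
  set a : M := h • (m + s m) with ha
  have hsa : s a = a := by
    rw [ha, hs_h, hadd, hinv, add_comm]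
  set f : M := h • (m - s m) with hf
  have hsf : s f = - f := by
    rw [hf, hs_h, hsub, hinv, ← neg_sub, smul_neg]
  set w : M := -(h • m') with hw
  have hfw : f = X0 • w := by
    rw [hf, hw, show m - s m = -(X0 • m') by rw [← hm']; abel,
      smul_neg, smul_neg, smul_comm]
  have hXsw : X0 • s w = f := by
    have h1 : s f = -(X0 • s w) := by
      rw [hfw, hsemi, hσ0, neg_smul]
    have := hsf
    rw [h1, neg_inj] at this
    exact this
  set v : M := h • (w + s w) with hv
  have hsv : s v = v := by
    rw [hv, hs_h, hadd, hinv, add_comm]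
  have hXv : X0 • v = f := by
    rw [hv, smul_comm, smul_add, hXsw, hfw.symm, ← two_smul R f, ← mul_smul, h2R, one_smul]
  have hmaf : m = a + f := by
    rw [ha, hf, ← smul_add, show (m + s m) + (m - s m) = (2:R) • m by
      rw [two_smul]; abel, ← mul_smul, h2R, one_smul]
  have haN : a ∈ N := Submodule.subset_span hsa
  have hvN : v ∈ N := Submodule.subset_span hsv
  rw [hmaf, ← hXv]
  exact N.add_mem haN (N.smul_mem X0 hvN)
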